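/- Under Assumption 1, fix λ > 0 and R > 0. Then for all y ∈ ℝ^m with ‖y‖ ≤ M, all θ ∈ ℝ^d with ‖θ‖ ≤ R, and all Borel sets A ⊆ ℝ^d, the kernel satisfies Q(y, θ, A) ≥ m_{R,M,λ,K} · Leb(A ∩ {x ∈ ℝ^d : ‖x‖ ≤ R}), where m_{R,M,λ,K} := inf{ f_{ξ_0}(z)/(2λ)^{d/2} : z ∈ ℝ^d, ‖z‖ ≤ ((λK+2)R + λK(M+1))/√(2λ) } > 0 and f_{ξ_0} is the standard d-dimensional Gaussian density. Consequently, there exist a Borel probability measure ν_R on ℝ^d and a coefficient α̃_R ∈ (0,1) such that Q(y, θ, A) ≥ α̃_R·ν_R(A) for all such y, θ and all Borel A. -/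

import Mathlib

open MeasureTheory ProbabilityTheory Filter Real
open scoped RealInnerProductSpace ENNReal

noncomputable section

/-- `ℝ^d` as Euclidean space. -/
abbrev Ed (d : ℕ) : Type := EuclideanSpace ℝ (Fin d)

/-- The standard Gaussian measure on `ℝ^d` (mean `0`, identity covariance). -/
def stdGaussian (d : ℕ) : Measure (Ed d) :=
  (Measure.pi fun _ : Fin d => gaussianReal 0 1).map
    (MeasurableEquiv.toLp 2 (Fin d → ℝ))

/-- The SGLD parametric transition kernel
`Q(y, θ, A) = P(θ − λH(θ,y) + √(2λ)ξ₀ ∈ A)`, as a measure in its last argument. -/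
def kernelQ {d m : ℕ} (H : Ed d → Ed m → Ed d) (lam : ℝ) (y : Ed m) (θ : Ed d) :
    Measure (Ed d) :=
  (stdGaussian d).map (fun z => θ - lam • H θ y + (Real.sqrt (2 * lam)) • z)

/-- The standard `d`-dimensional Gaussian probability density. -/
def gaussDensity (d : ℕ) (z : Ed d) : ℝ :=
  (2 * Real.pi) ^ (-(d : ℝ) / 2) * Real.exp (-‖z‖ ^ 2 / 2)

/- ### Auxiliary lemmas -/

lemma aux_lintegral_pi_prod : ∀ (n : ℕ) (f : Fin n → ℝ → ENNReal), (∀ i, Measurable (f i)) →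
    ∫⁻ x : Fin n → ℝ, ∏ i, f i (x i) ∂(Measure.pi fun _ => (volume : Measure ℝ))
      = ∏ i, ∫⁻ t, f i t := by
  intro n
  induction n with
  | zero => intro f hf; simp [Measure.pi_of_empty]
  | succ n ih =>
      intro f hf
      have hmp := ((measurePreserving_piFinSuccAbove (fun _ : Fin (n+1) => (volume : Measure ℝ)) 0).symm)
      rw [← hmp.lintegral_comp_emb (MeasurableEquiv.measurableEmbedding _)]
      simp_rw [MeasurableEquiv.piFinSuccAbove_symm_apply, Fin.insertNthEquiv,
        Fin.prod_univ_succ, Fin.insertNth_zero]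
      simp only [Fin.zero_succAbove, Function.comp_def, Fin.cons_zero, Fin.cons_succ,
        Equiv.coe_fn_mk, cast_eq]
      have hm2 : Measurable fun x : Fin n → ℝ => ∏ i, f i.succ (x i) :=
        Finset.measurable_prod _ fun i _ => (hf i.succ).comp (measurable_pi_apply i)
      have hmeas : Measurable fun p : ℝ × (Fin n → ℝ) => f 0 p.1 * ∏ i, f i.succ (p.2 i) :=
        ((hf 0).comp measurable_fst).mul (hm2.comp measurable_snd)
      rw [lintegral_prod _ hmeas.aemeasurable]
      simp_rw [lintegral_const_mul _ hm2]
      rw [lintegral_mul_const _ (hf 0), ih (fun i => f i.succ) (fun i => hf i.succ)]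

lemma aux_pi_gauss (n : ℕ) :
    Measure.pi (fun _ : Fin n => gaussianReal 0 1)
      = (Measure.pi fun _ : Fin n => (volume : Measure ℝ)).withDensity
          (fun x => ∏ i, gaussianPDF 0 1 (x i)) := by
  apply Measure.pi_eq
  intro s hs
  rw [withDensity_apply _ (MeasurableSet.univ_pi hs),
    ← lintegral_indicator (MeasurableSet.univ_pi hs)]
  have key : ∀ x : Fin n → ℝ,
      (Set.pi Set.univ s).indicator (fun x => ∏ i, gaussianPDF 0 1 (x i)) x
        = ∏ i, (s i).indicator (gaussianPDF 0 1) (x i) := by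
    intro x
    by_cases hx : x ∈ Set.pi Set.univ s
    · rw [Set.indicator_of_mem hx]
      exact Finset.prod_congr rfl fun i _ =>
        (Set.indicator_of_mem (hx i (Set.mem_univ i)) _).symm
    · rw [Set.indicator_of_notMem hx]
      rw [Set.mem_univ_pi] at hx
      push_neg at hx
      obtain ⟨i, hi⟩ := hx
      exact (Finset.prod_eq_zero (Finset.mem_univ i)
        (Set.indicator_of_notMem hi _)).symm
  simp_rw [key]
  rw [aux_lintegral_pi_prod n _ (fun i => (measurable_gaussianPDF 0 1).indicator (hs i))]
  refine Finset.prod_congr rfl fun i _ => ?_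
  rw [lintegral_indicator (hs i), ← withDensity_apply _ (hs i),
    ← gaussianReal_of_var_ne_zero 0 one_ne_zero]

lemma aux_rpow_half (a : ℝ) (ha : 0 ≤ a) (d : ℕ) :
    a ^ ((d : ℝ) / 2) = Real.sqrt a ^ d := by
  rw [Real.sqrt_eq_rpow, ← Real.rpow_natCast (a ^ (1/2 : ℝ)) d, ← Real.rpow_mul ha]
  ring_nf

lemma aux_rpow_neg_half (a : ℝ) (ha : 0 ≤ a) (d : ℕ) :
    a ^ (-(d : ℝ) / 2) = ((Real.sqrt a) ^ d)⁻¹ := by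
  rw [← aux_rpow_half a ha d, ← Real.rpow_neg ha]
  ring_nf

lemma aux_gaussDensity_continuous (d : ℕ) : Continuous (gaussDensity d) := by
  unfold gaussDensity
  fun_prop

lemma aux_gaussDensity_nonneg (d : ℕ) (z : Ed d) : 0 ≤ gaussDensity d z := by
  unfold gaussDensity
  positivity

lemma aux_stdGaussian_eq (d : ℕ) :
    stdGaussian d = volume.withDensity (fun z => ENNReal.ofReal (gaussDensity d z)) := by
  have e := (MeasurableEquiv.toLp 2 (Fin d → ℝ)).symm
  refine Measure.ext fun S hS => ?_
  rw [_root_.stdGaussian, MeasurableEquiv.map_apply, aux_pi_gauss,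
    withDensity_apply _ (MeasurableSet.preimage hS (MeasurableEquiv.measurable _)),
    withDensity_apply _ hS]
  have hvp := EuclideanSpace.volume_preserving_symm_measurableEquiv_toLp (Fin d)
  have hFmeas : Measurable (fun a : Fin d → ℝ => ∏ i, gaussianPDF 0 1 (a i)) :=
    Finset.measurable_prod _ fun i _ => (measurable_gaussianPDF 0 1).comp (measurable_pi_apply i)
  rw [← volume_pi, ← hvp.map_eq, setLIntegral_map
    (MeasurableSet.preimage hS (MeasurableEquiv.measurable _))
    hFmeas (MeasurableEquiv.measurable _)]
  have hpre : (MeasurableEquiv.toLp 2 (Fin d → ℝ)).symm ⁻¹'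
      ((MeasurableEquiv.toLp 2 (Fin d → ℝ)) ⁻¹' S) = S := by
    ext x; simp
  rw [hpre]
  refine setLIntegral_congr_fun hS (fun z _ => ?_)
  have hcoord : ∀ i, (MeasurableEquiv.toLp 2 (Fin d → ℝ)).symm z i = z i := fun i => rfl
  simp_rw [gaussianPDF, hcoord]
  rw [← ENNReal.ofReal_prod_of_nonneg (fun i _ => gaussianPDFReal_nonneg 0 1 (z i))]
  congr 1
  unfold gaussDensity gaussianPDFReal
  simp only [sub_zero, NNReal.coe_one, mul_one]
  rw [Finset.prod_mul_distrib, Finset.prod_const, ← Real.exp_sum]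
  have hnorm : ‖z‖ ^ 2 = ∑ i, z i ^ 2 := by
    rw [EuclideanSpace.norm_eq, Real.sq_sqrt]
    · simp [sq_abs]
    · positivity
  rw [hnorm, aux_rpow_neg_half _ (by positivity)]
  congr 1
  · rw [Finset.card_univ, Fintype.card_fin, inv_pow]
  · rw [← Finset.sum_div, ← Finset.sum_neg_distrib]

/-- (Minorization condition: compact sets are small.) Under Assumption 1,
for any `λ, R > 0`, with `m_{R,M,λ,K} := inf{f_{ξ₀}(z)/(2λ)^{d/2} : ‖z‖ ≤ ((λK+2)R+λK(M+1))/√(2λ)}`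
one has `m_{R,M,λ,K} > 0` and `Q(y,θ,A) ≥ m_{R,M,λ,K}·Leb(A ∩ {‖x‖ ≤ R})` whenever
`‖y‖ ≤ M`, `‖θ‖ ≤ R`; consequently there are a Borel probability measure `ν_R` and a
constant `α̃_R ∈ (0,1)` with `Q(y,θ,·) ≥ α̃_R ν_R`. -/
theorem stmt5 {d m : ℕ}
    (H : Ed d → Ed m → Ed d) (hH : Measurable (Function.uncurry H))
    (Δ b K M : ℝ)
    (hΔ : 0 < Δ) (hb : 0 < b)
    (hdis : ∀ (θ : Ed d) (y : Ed m), Δ * ‖θ‖ ^ 2 - b ≤ ⟪H θ y, θ⟫)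
    (hK : Δ / Real.sqrt 2 < K)
    (hlin : ∀ (θ : Ed d) (y : Ed m), ‖H θ y‖ ≤ K * (‖θ‖ + ‖y‖ + 1))
    (hM : 0 < M)
    (lam R : ℝ) (hlam : 0 < lam) (hR : 0 < R) :
    (0 < sInf {x : ℝ | ∃ z : Ed d,
        ‖z‖ ≤ ((lam * K + 2) * R + lam * K * (M + 1)) / Real.sqrt (2 * lam) ∧
        x = gaussDensity d z / (2 * lam) ^ ((d : ℝ) / 2)}) ∧
    (∀ (y : Ed m) (θ : Ed d) (A : Set (Ed d)), ‖y‖ ≤ M → ‖θ‖ ≤ R → MeasurableSet A →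
      ENNReal.ofReal (sInf {x : ℝ | ∃ z : Ed d,
          ‖z‖ ≤ ((lam * K + 2) * R + lam * K * (M + 1)) / Real.sqrt (2 * lam) ∧
          x = gaussDensity d z / (2 * lam) ^ ((d : ℝ) / 2)})
        * volume (A ∩ {x : Ed d | ‖x‖ ≤ R}) ≤ kernelQ H lam y θ A) ∧
    (∃ ν : Measure (Ed d), IsProbabilityMeasure ν ∧ ∃ αR : ℝ, αR ∈ Set.Ioo (0 : ℝ) 1 ∧
      ∀ (y : Ed m) (θ : Ed d) (A : Set (Ed d)), ‖y‖ ≤ M → ‖θ‖ ≤ R → MeasurableSet A →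
        ENNReal.ofReal αR * ν A ≤ kernelQ H lam y θ A) := by
  have hK0 : 0 < K := lt_trans (div_pos hΔ (Real.sqrt_pos.2 two_pos)) hK
  set r : ℝ := ((lam * K + 2) * R + lam * K * (M + 1)) / Real.sqrt (2 * lam) with hr_def
  set S : Set ℝ := {x : ℝ | ∃ z : Ed d, ‖z‖ ≤ r ∧
      x = gaussDensity d z / (2 * lam) ^ ((d : ℝ) / 2)} with hS_def
  have h2lam : (0:ℝ) < 2 * lam := by linarith
  have hsq : (0:ℝ) < Real.sqrt (2 * lam) := Real.sqrt_pos.2 h2lam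
  have hnum : (0:ℝ) < (lam * K + 2) * R + lam * K * (M + 1) := by positivity
  have hr0 : 0 ≤ r := le_of_lt (div_pos hnum hsq)
  have hpow : (0:ℝ) < (2 * lam) ^ ((d : ℝ) / 2) := Real.rpow_pos_of_pos h2lam _
  have hne : S.Nonempty := ⟨gaussDensity d 0 / (2 * lam) ^ ((d : ℝ) / 2), 0, by simpa, rfl⟩
  -- lower bound for the set
  set c0 : ℝ := (2 * Real.pi) ^ (-(d : ℝ) / 2) * Real.exp (-r ^ 2 / 2)
      / (2 * lam) ^ ((d : ℝ) / 2) with hc0_def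
  have hc0 : 0 < c0 := by
    have := Real.rpow_pos_of_pos (by positivity : (0:ℝ) < 2 * Real.pi) (-(d : ℝ) / 2)
    positivity
  have hlow : ∀ x ∈ S, c0 ≤ x := by
    rintro x ⟨z, hz, rfl⟩
    have h1 : -r ^ 2 / 2 ≤ -‖z‖ ^ 2 / 2 := by
      have : ‖z‖ ^ 2 ≤ r ^ 2 := by
        have := norm_nonneg z
        nlinarith
      linarith
    unfold gaussDensity
    refine (div_le_div_iff_of_pos_right hpow).2 ?_
    refine mul_le_mul_of_nonneg_left (Real.exp_le_exp.2 h1) ?_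
    exact le_of_lt (Real.rpow_pos_of_pos (by positivity) _)
  have hbdd : BddBelow S := ⟨0, by
    rintro x ⟨z, hz, rfl⟩
    have := aux_gaussDensity_nonneg d z
    positivity⟩
  have hmR : 0 < sInf S := lt_of_lt_of_le hc0 (le_csInf hne hlow)
  -- the ball
  set B : Set (Ed d) := {x : Ed d | ‖x‖ ≤ R} with hB_def
  have hBeq : B = Metric.closedBall (0 : Ed d) R := by
    ext x; simp [hB_def, Metric.mem_closedBall, dist_zero_right]
  have hB : MeasurableSet B := by rw [hBeq]; exact measurableSet_closedBall
  -- key minorization bound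
  have key : ∀ (y : Ed m) (θ : Ed d) (A : Set (Ed d)), ‖y‖ ≤ M → ‖θ‖ ≤ R → MeasurableSet A →
      ENNReal.ofReal (sInf S) * volume (A ∩ B) ≤ kernelQ H lam y θ A := by
    intro y θ A hy hθ hA
    set c : ℝ := Real.sqrt (2 * lam) with hc_def
    set μ0 : Ed d := θ - lam • H θ y with hμ0_def
    set T : Ed d → Ed d := fun z => θ - lam • H θ y + c • z with hT_def
    have hT : Measurable T := (measurable_id.const_smul c).const_add _
    have hQ : kernelQ H lam y θ A = stdGaussian d (T ⁻¹' A) := by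
      rw [kernelQ, Measure.map_apply hT hA]
    set W : Set (Ed d) := T ⁻¹' (A ∩ B) with hW_def
    have hWmeas : MeasurableSet W := hT (hA.inter hB)
    have hmono : stdGaussian d W ≤ stdGaussian d (T ⁻¹' A) :=
      measure_mono (Set.preimage_mono Set.inter_subset_left)
    -- pointwise density bound on W
    have hball : ∀ z ∈ W, ‖z‖ ≤ r := by
      intro z hz
      obtain ⟨hzA, hzB⟩ := hz
      have hTz : ‖T z‖ ≤ R := hzB
      have hczn : c * ‖z‖ = ‖T z - μ0‖ := by
        rw [hT_def]
        simp only [hμ0_def, add_sub_cancel_left]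
        rw [norm_smul, Real.norm_eq_abs, abs_of_pos hsq]
      have hμ0n : ‖μ0‖ ≤ R + lam * (K * (R + M + 1)) := by
        have h1 : ‖μ0‖ ≤ ‖θ‖ + lam * ‖H θ y‖ := by
          rw [hμ0_def]
          refine le_trans (norm_sub_le _ _) ?_
          rw [norm_smul, Real.norm_eq_abs, abs_of_pos hlam]
        have h2 : ‖H θ y‖ ≤ K * (R + M + 1) := by
          refine le_trans (hlin θ y) ?_
          have := norm_nonneg y
          nlinarith
        nlinarith
      have : c * ‖z‖ ≤ (lam * K + 2) * R + lam * K * (M + 1) := by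
        rw [hczn]
        refine le_trans (norm_sub_le _ _) ?_
        nlinarith [hTz, hμ0n]
      have hrr : r = ((lam * K + 2) * R + lam * K * (M + 1)) / c := rfl
      rw [hrr, le_div_iff₀ hsq, mul_comm]
      exact this
    have hpt : ∀ z ∈ W, ENNReal.ofReal (sInf S * (2 * lam) ^ ((d : ℝ) / 2))
        ≤ ENNReal.ofReal (gaussDensity d z) := by
      intro z hz
      refine ENNReal.ofReal_le_ofReal ?_
      have hmem : gaussDensity d z / (2 * lam) ^ ((d : ℝ) / 2) ∈ S := ⟨z, hball z hz, rfl⟩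
      have := csInf_le hbdd hmem
      rw [le_div_iff₀ hpow] at this
      linarith
    -- lower bound the Gaussian measure of W
    have hWlow : ENNReal.ofReal (sInf S * (2 * lam) ^ ((d : ℝ) / 2)) * volume W
        ≤ stdGaussian d W := by
      rw [aux_stdGaussian_eq, withDensity_apply _ hWmeas, ← setLIntegral_const W _]
      exact setLIntegral_mono ((aux_gaussDensity_continuous d).measurable.ennreal_ofReal)
        hpt
    -- compute volume of W
    have hvolW : volume W = ENNReal.ofReal ((c ^ d)⁻¹) * volume (A ∩ B) := by
      have hWrepr : W = (fun z : Ed d => c • z) ⁻¹'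
          ((fun x : Ed d => μ0 + x) ⁻¹' (A ∩ B)) := rfl
      rw [hWrepr, Measure.addHaar_preimage_smul _ (ne_of_gt hsq),
        measure_preimage_add]
      congr 2
      rw [abs_of_pos (by positivity), finrank_euclideanSpace_fin]
    have hcd : (2 * lam) ^ ((d : ℝ) / 2) * (c ^ d)⁻¹ = 1 := by
      rw [aux_rpow_half _ (le_of_lt h2lam), hc_def]
      field_simp
    calc ENNReal.ofReal (sInf S) * volume (A ∩ B)
        = ENNReal.ofReal (sInf S * (2 * lam) ^ ((d : ℝ) / 2)) *
            (ENNReal.ofReal ((c ^ d)⁻¹) * volume (A ∩ B)) := by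
          rw [← mul_assoc, ← ENNReal.ofReal_mul (by positivity), mul_assoc (sInf S),
            hcd, mul_one]
      _ = ENNReal.ofReal (sInf S * (2 * lam) ^ ((d : ℝ) / 2)) * volume W := by rw [hvolW]
      _ ≤ stdGaussian d W := hWlow
      _ ≤ stdGaussian d (T ⁻¹' A) := hmono
      _ = kernelQ H lam y θ A := hQ.symm
  refine ⟨hmR, fun y θ A hy hθ hA => key y θ A hy hθ hA, ?_⟩
  -- part 3
  have hvolBpos : 0 < volume B := by
    rw [hBeq]
    exact Metric.measure_closedBall_pos _ _ hR
  have hvolBfin : volume B < ⊤ := by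
    rw [hBeq]
    exact (isCompact_closedBall _ _).measure_lt_top
  set ν : Measure (Ed d) := (volume B)⁻¹ • volume.restrict B with hν_def
  have hνprob : IsProbabilityMeasure ν := by
    constructor
    rw [hν_def, Measure.smul_apply, Measure.restrict_apply_univ, smul_eq_mul,
      ENNReal.inv_mul_cancel (ne_of_gt hvolBpos) (ne_of_lt hvolBfin)]
  set αR : ℝ := min (sInf S * (volume B).toReal) 2⁻¹ with hα_def
  have hvolBtoReal : 0 < (volume B).toReal :=
    ENNReal.toReal_pos (ne_of_gt hvolBpos) (ne_of_lt hvolBfin)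
  refine ⟨ν, hνprob, αR, ⟨lt_min (by positivity) (by norm_num),
    lt_of_le_of_lt (min_le_right _ _) (by norm_num)⟩, ?_⟩
  intro y θ A hy hθ hA
  refine le_trans ?_ (key y θ A hy hθ hA)
  have hνA : ν A = (volume B)⁻¹ * volume (A ∩ B) := by
    rw [hν_def, Measure.smul_apply, Measure.restrict_apply hA, smul_eq_mul]
  rw [hνA]
  have h1 : ENNReal.ofReal αR ≤ ENNReal.ofReal (sInf S) * volume B := by
    refine le_trans (ENNReal.ofReal_le_ofReal (min_le_left _ _)) ?_
    rw [ENNReal.ofReal_mul (le_of_lt hmR), ENNReal.ofReal_toReal (ne_of_lt hvolBfin)]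
  calc ENNReal.ofReal αR * ((volume B)⁻¹ * volume (A ∩ B))
      ≤ ENNReal.ofReal (sInf S) * volume B * ((volume B)⁻¹ * volume (A ∩ B)) :=
        mul_le_mul_left h1 _
    _ = ENNReal.ofReal (sInf S) * (volume B * (volume B)⁻¹) * volume (A ∩ B) := by
        ring
    _ = ENNReal.ofReal (sInf S) * volume (A ∩ B) := by
        rw [ENNReal.mul_inv_cancel (ne_of_gt hvolBpos) (ne_of_lt hvolBfin), mul_one]
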